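/- Let P be a poset with least element 0, let Z be a lower complete sublattice of P which is P-central, and let I ⊆ P be Z-complete. Then c_Z I = {c_Z(p) : p ∈ I} is an upper complete sublattice of the subposet Z: every subset of c_Z I has a least upper bound within the subposet Z, and this least upper bound lies in c_Z I. -/
import Mathlib


/-- `S` is `Z`-disjoint: there is `f : S → Z` with `p ≤ f p` and `f p ∧ f q = 0`
for distinct `p, q ∈ S`. -/
def ZDisjoint {β : Type*} [PartialOrder β] [OrderBot β] (Z S : Set β) : Prop :=
  ∃ f : β → β, (∀ p ∈ S, f p ∈ Z ∧ p ≤ f p) ∧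
    ∀ p ∈ S, ∀ q ∈ S, p ≠ q → Disjoint (f p) (f q)

/-- `I` is `Z`-complete: every `Z`-disjoint `S ⊆ I` has a supremum lying in `I`, and
whenever `{p, q}` is `Z`-disjoint with supremum in `I`, both `p` and `q` lie in `I`. -/
def ZComplete {β : Type*} [PartialOrder β] [OrderBot β] (Z I : Set β) : Prop :=
  (∀ S ⊆ I, ZDisjoint Z S → ∃ s, IsLUB S s ∧ s ∈ I) ∧
  (∀ p q s, ZDisjoint Z {p, q} → IsLUB {p, q} s → s ∈ I → p ∈ I ∧ q ∈ I)

/-- `Z` is `S`-central: for every `p ∈ S` and `y ∈ Z` there is `z ∈ Z` with `y ∧ z = 0`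
and `p` the supremum of some `q ≤ y` and `r ≤ z`. -/
def SCentral {β : Type*} [PartialOrder β] [OrderBot β] (Z S : Set β) : Prop :=
  ∀ p ∈ S, ∀ y ∈ Z, ∃ z ∈ Z, Disjoint y z ∧ ∃ q r, q ≤ y ∧ r ≤ z ∧ IsLUB {q, r} p
/-- If `Z` is a lower complete sublattice of `P` (every subset of `Z` has an infimum in
`P` lying in `Z`), `Z` is `P`-central and `I` is `Z`-complete, then `c_Z I` is an upper
complete sublattice of the subposet `Z`: every subset of `c_Z I` has a least upper bound
within `Z`, which lies in `c_Z I`.  Here `c : α → α` is the `Z`-cover map, characterized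
by `c p ∈ Z` and `c p = inf {z ∈ Z | p ≤ z}` in `P`. -/
theorem stmt2 {α : Type*} [PartialOrder α] [OrderBot α] (Z I : Set α) (c : α → α)
    (hZl : ∀ S ⊆ Z, ∃ i, IsGLB S i ∧ i ∈ Z)
    (hc : ∀ p, c p ∈ Z ∧ IsGLB {z | z ∈ Z ∧ p ≤ z} (c p))
    (hcen : SCentral Z Set.univ)
    (hI : ZComplete Z I) :
    ∀ S ⊆ c '' I, ∃ s ∈ c '' I, (∀ p ∈ S, p ≤ s) ∧
      ∀ w ∈ Z, (∀ p ∈ S, p ≤ w) → s ≤ w := by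
  intro S hS
  classical
  obtain ⟨w, hwglb, hwZ⟩ := hZl {z | z ∈ Z ∧ ∀ s ∈ S, s ≤ z} (fun z hz => hz.1)
  have hcmem : ∀ p, c p ∈ Z := fun p => (hc p).1
  have hlec : ∀ p, p ≤ c p := fun p => (hc p).2.2 (fun z hz => hz.2)
  have hcle : ∀ p z, z ∈ Z → p ≤ z → c p ≤ z := fun p z hz hpz => (hc p).2.1 ⟨hz, hpz⟩
  have hSw : ∀ s ∈ S, s ≤ w := by
    intro s hs
    exact hwglb.2 (fun z hz => hz.2 s hs)
  set 𝒞 : Set (Set α) := {T | T ⊆ I ∧ (∀ t ∈ T, t ≤ w) ∧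
    ∀ t ∈ T, ∀ t' ∈ T, t ≠ t' → Disjoint (c t) (c t')} with h𝒞
  have hchains : ∀ ch ⊆ 𝒞, IsChain (· ⊆ ·) ch → ∃ ub ∈ 𝒞, ∀ s ∈ ch, s ⊆ ub := by
    intro ch hch hchain
    refine ⟨⋃₀ ch, ⟨?_, ?_, ?_⟩, fun s hs => Set.subset_sUnion_of_mem hs⟩
    · rintro t ⟨A, hA, htA⟩; exact (hch hA).1 htA
    · rintro t ⟨A, hA, htA⟩; exact (hch hA).2.1 t htA
    · rintro t ⟨A, hA, htA⟩ t' ⟨B, hB, htB⟩ hne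
      rcases hchain.total hA hB with h | h
      · exact (hch hB).2.2 t (h htA) t' htB hne
      · exact (hch hA).2.2 t htA t' (h htB) hne
  obtain ⟨T, hTmax⟩ := zorn_subset 𝒞 hchains
  obtain ⟨hTI, hTw, hTd⟩ := hTmax.1
  have hTZd : ZDisjoint Z T := ⟨c, fun p _ => ⟨hcmem p, hlec p⟩, hTd⟩
  obtain ⟨t₀, ht₀lub, ht₀I⟩ := hI.1 T hTI hTZd
  -- key claim: every Z-upper bound of T is above all of S
  have key : ∀ z ∈ Z, (∀ t ∈ T, t ≤ z) → ∀ s ∈ S, s ≤ z := by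
    intro z hzZ hTz s hsS
    obtain ⟨p, hpI, rfl⟩ := hS hsS
    by_contra hpz
    have hpz' : ¬ p ≤ z := fun h => hpz (hcle p z hzZ h)
    obtain ⟨z', hz'Z, hdisj, q, r, hq, hr, hlub⟩ := hcen p (Set.mem_univ p) z hzZ
    have hqrZd : ZDisjoint Z {q, r} := by
      refine ⟨fun x => if x = q then z else z', ?_, ?_⟩
      · rintro x (rfl | rfl)
        · simp [hzZ, hq]
        · by_cases hxq : x = q
          · subst hxq; simp [hzZ, hq]
          · simp [hxq, hz'Z, hr]
      · rintro x (rfl | rfl) y (rfl | rfl) hne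
        · exact absurd rfl hne
        · have hyx : y ≠ x := fun h => hne h.symm
          simp only [if_pos rfl, if_neg hyx]
          exact hdisj
        · simp only [if_pos rfl, if_neg hne]
          exact hdisj.symm
        · exact absurd rfl hne
    obtain ⟨hqI, hrI⟩ := hI.2 q r p hqrZd hlub hpI
    have hrz : ¬ r ≤ z := by
      intro h
      have hrbot : r ≤ ⊥ := hdisj h hr
      refine hpz' (hlub.2 (fun x hx => ?_))
      rcases hx with rfl | rfl
      exacts [hq, hrbot.trans bot_le]
    have hrT : r ∉ T := fun h => hrz (hTz r h)
    have hrp : r ≤ p := hlub.1 (by simp)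
    have hins : insert r T ∈ 𝒞 := by
      refine ⟨Set.insert_subset hrI hTI, ?_, ?_⟩
      · rintro t (rfl | ht)
        · exact hrp.trans ((hlec p).trans (hSw _ hsS))
        · exact hTw t ht
      · have hdr : ∀ t ∈ T, Disjoint (c r) (c t) := by
          intro t ht
          exact Disjoint.mono (hcle r z' hz'Z hr) (hcle t z hzZ (hTz t ht)) hdisj.symm
        rintro t (rfl | ht) t' (rfl | ht') hne
        · exact absurd rfl hne
        · exact hdr t' ht'
        · exact (hdr t ht).symm
        · exact hTd t ht t' ht' hne
    exact hrT (hTmax.2 hins (Set.subset_insert r T) (Set.mem_insert r T))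
  refine ⟨w, ⟨t₀, ht₀I, ?_⟩, hSw, fun w' hw'Z hw' => hwglb.1 ⟨hw'Z, hw'⟩⟩
  have h1 : c t₀ ≤ w := hcle t₀ w hwZ (ht₀lub.2 (fun t ht => hTw t ht))
  have h2 : w ≤ c t₀ :=
    hwglb.1 ⟨hcmem t₀, key (c t₀) (hcmem t₀) (fun t ht => (ht₀lub.1 ht).trans (hlec t₀))⟩
  exact le_antisymm h1 h2
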